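/- Let v : J = (-1,1) → ℝ² be analytic with v₂(t) ≠ 0 and v₁'(t)v₂(t) ≠ v₁(t)v₂'(t) for all t ∈ J, and set φ(t) = v₁(t)/v₂(t). Suppose 0 < |φ'(t)| < β for all t ∈ J, and let δ = 1/β. Then the map φ̂ : (-δ,δ) × J → ℝ², φ̂(x,y) = (x, y - x·φ(y)), is injective and has invertible derivative at every point; hence it is an analytic diffeomorphism onto its image. -/
import Mathlib


open Real Set

/-- the shear map `(x,y) ↦ (x, y - x·φ(y))` associated to an analytic
nonvanishing curve `v = (v₁, v₂)` with `0 < |φ'| < β`, `φ = v₁/v₂`, is injective on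
`(-δ,δ) × J` with everywhere invertible derivative (determinant `1 - x·φ'(y) ≠ 0`),
where `δ = 1/β`; moreover it is analytic, hence an analytic diffeomorphism onto its image. -/
theorem stmt_3 (v₁ v₂ : ℝ → ℝ) (β : ℝ) (hβ : 0 < β)
    (J : Set ℝ) (hJ : J = Ioo (-1 : ℝ) 1)
    (hv₁ : AnalyticOnNhd ℝ v₁ J) (hv₂ : AnalyticOnNhd ℝ v₂ J)
    (hv₂0 : ∀ t ∈ J, v₂ t ≠ 0)
    (hnd : ∀ t ∈ J, deriv v₁ t * v₂ t ≠ v₁ t * deriv v₂ t)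
    (φ : ℝ → ℝ) (hφ : ∀ t ∈ J, φ t = v₁ t / v₂ t)
    (hφ' : ∀ t ∈ J, 0 < |deriv φ t| ∧ |deriv φ t| < β)
    (δ : ℝ) (hδ : δ = 1 / β) :
    Set.InjOn (fun p : ℝ × ℝ => (p.1, p.2 - p.1 * φ p.2)) (Ioo (-δ) δ ×ˢ J) ∧
    (∀ p ∈ Ioo (-δ) δ ×ˢ J, 1 - p.1 * deriv φ p.2 ≠ 0) ∧
    AnalyticOnNhd ℝ (fun p : ℝ × ℝ => (p.1, p.2 - p.1 * φ p.2)) (Ioo (-δ) δ ×ˢ J) := by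
  have hJopen : IsOpen J := hJ ▸ isOpen_Ioo
  have hdiff : ∀ t ∈ J, DifferentiableAt ℝ φ t := by
    intro t ht
    by_contra h
    have h0 := deriv_zero_of_not_differentiableAt h
    have := (hφ' t ht).1
    rw [h0] at this; simp at this
  -- bound on |x * φ'(c)|
  have hbound : ∀ x : ℝ, x ∈ Ioo (-δ) δ → ∀ c ∈ J, |x * deriv φ c| < 1 := by
    intro x hx c hc
    have hxabs : |x| < δ := abs_lt.2 ⟨hx.1, hx.2⟩
    have hφc : |deriv φ c| < β := (hφ' c hc).2
    have h1 : |x * deriv φ c| = |x| * |deriv φ c| := abs_mul _ _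
    rw [h1]
    calc |x| * |deriv φ c| ≤ |x| * β :=
          mul_le_mul_of_nonneg_left (le_of_lt hφc) (abs_nonneg _)
      _ < δ * β := by
          apply mul_lt_mul_of_pos_right hxabs hβ
      _ = 1 := by rw [hδ]; field_simp
  -- key injectivity helper
  have key : ∀ x ∈ Ioo (-δ) δ, ∀ y ∈ J, ∀ y' ∈ J, y < y' →
      y - x * φ y = y' - x * φ y' → False := by
    intro x hx y hy y' hy' hlt heq
    have hsub : Icc y y' ⊆ J := by
      rw [hJ] at hy hy' ⊢
      exact Icc_subset_Ioo hy.1 hy'.2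
    have hdiffIoo : ∀ c ∈ Ioo y y', HasDerivAt φ (deriv φ c) c := by
      intro c hc
      exact (hdiff c (hsub (Ioo_subset_Icc_self hc))).hasDerivAt
    have hcont : ContinuousOn φ (Icc y y') := by
      intro c hc
      exact (hdiff c (hsub hc)).continuousAt.continuousWithinAt
    obtain ⟨c, hc, hslope⟩ := exists_hasDerivAt_eq_slope φ (deriv φ) hlt hcont hdiffIoo
    have hcJ : c ∈ J := hsub (Ioo_subset_Icc_self hc)
    have hne : y' - y ≠ 0 := sub_ne_zero.2 (ne_of_gt hlt)
    -- from heq : y' - y = x * (φ y' - φ y)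
    have heq2 : y' - y = x * (φ y' - φ y) := by linear_combination -heq
    have hφdiff : φ y' - φ y = deriv φ c * (y' - y) := by
      field_simp at hslope
      linarith [hslope]
    have h2 : x * deriv φ c = 1 := by
      apply mul_right_cancel₀ hne
      rw [one_mul]
      linear_combination -heq2 - x * hφdiff
    have := hbound x hx c hcJ
    rw [h2] at this; simp at this
  -- analyticity of φ on J
  have hφana : AnalyticOnNhd ℝ φ J := by
    intro t ht
    have hq : AnalyticAt ℝ (fun s => v₁ s / v₂ s) t := (hv₁ t ht).div (hv₂ t ht) (hv₂0 t ht)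
    apply hq.congr
    filter_upwards [hJopen.mem_nhds ht] with s hs
    exact (hφ s hs).symm
  refine ⟨?_, ?_, ?_⟩
  · intro p hp q hq heq
    simp only [Prod.mk.injEq] at heq
    obtain ⟨h1, h2⟩ := heq
    have hpy : p.2 ∈ J := hp.2
    have hqy : q.2 ∈ J := hq.2
    rcases lt_trichotomy p.2 q.2 with h | h | h
    · exact absurd (by rw [h1] at h2; exact h2) (fun hh => key q.1 hq.1 p.2 hpy q.2 hqy h hh)
    · exact Prod.ext h1 h
    · exact absurd (by rw [h1] at h2; exact h2.symm) (fun hh => key q.1 hq.1 q.2 hqy p.2 hpy h hh)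
  · intro p hp h0
    have hb := hbound p.1 hp.1 p.2 hp.2
    have h1 : p.1 * deriv φ p.2 = 1 := by linarith
    rw [h1] at hb
    simp at hb
  · intro p hp
    have h1 : AnalyticAt ℝ (fun q : ℝ × ℝ => q.1) p := analyticAt_fst
    have h2 : AnalyticAt ℝ (fun q : ℝ × ℝ => q.2) p := analyticAt_snd
    have h3 : AnalyticAt ℝ (fun q : ℝ × ℝ => φ q.2) p :=
      (hφana p.2 hp.2).comp analyticAt_snd
    exact h1.prod (h2.sub (h1.mul h3))
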